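/- arXiv:2601.18721 — 3 statements merged into one kernel-verified Lean document; each statement's English description precedes it below -/
import Mathlib

section
/- With the generalized fundamental Lagrange-Laurent polynomials L_{k,l} defined recursively by L_{k,ν_k-1} = ℓ_{k,ν_k-1} and L_{k,l}(z) = ℓ_{k,l}(z) - Σ_{s=l+1}^{ν_k-1} ℓ_{k,l}^{(s)}(z̃_k) L_{k,s}(z), where ℓ_{k,l}(z) = (z - z̃_k)^l / l! · (z̃_k/z)^p · ∏_{j≠k} ((z - z̃_j)/(z̃_k - z̃_j))^{ν_j}, the following duality holds: L_{k,l}^{(σ)}(z̃_j) = 1 if j = k and σ = l, and 0 otherwise, for all 0 ≤ j ≤ m-1 and 0 ≤ σ ≤ ν_j - 1. -/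
section helpers

private lemma iterDeriv_eq_within {U : Set ℂ} (hU : IsOpen U) {x : ℂ} (hx : x ∈ U)
    (n : ℕ) (f : ℂ → ℂ) : iteratedDerivWithin n f U x = iteratedDeriv n f x := by
  simp only [iteratedDerivWithin, iteratedDeriv, iteratedFDerivWithin_of_isOpen n hU hx]

private lemma iterDeriv_sum {U : Set ℂ} (hU : IsOpen U) {a : ℂ} (ha : a ∈ U)
    (σ : ℕ) (S : Finset ℕ) (c : ℕ → ℂ) (g : ℕ → ℂ → ℂ)
    (hg : ∀ s ∈ S, AnalyticOnNhd ℂ (g s) U) :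
    iteratedDeriv σ (fun z => ∑ s ∈ S, c s * g s z) a
      = ∑ s ∈ S, c s * iteratedDeriv σ (g s) a := by
  classical
  induction S using Finset.induction with
  | empty =>
    simp only [Finset.sum_empty]
    rw [show (fun _ : ℂ => (0:ℂ)) = fun _ => (0:ℂ) from rfl, iteratedDeriv,
      iteratedFDeriv_zero_fun]
    simp
  | @insert i T hiT IH =>
    have hgi : ContDiffOn ℂ σ (fun z => c i * g i z) U :=
      (contDiffOn_const.mul ((hg i (Finset.mem_insert_self i T)).contDiffOn hU.uniqueDiffOn))
    have hgT : ContDiffOn ℂ σ (fun z => ∑ s ∈ T, c s * g s z) U := by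
      apply ContDiffOn.sum
      intro s hs
      exact contDiffOn_const.mul
        ((hg s (Finset.mem_insert_of_mem hs)).contDiffOn hU.uniqueDiffOn)
    have h1 : (fun z => ∑ s ∈ insert i T, c s * g s z)
        = (fun z => c i * g i z) + fun z => ∑ s ∈ T, c s * g s z := by
      funext z
      simp [Finset.sum_insert hiT]
    rw [h1, ← iterDeriv_eq_within hU ha, iteratedDerivWithin_add ha hU.uniqueDiffOn (hgi a ha) (hgT a ha),
      iterDeriv_eq_within hU ha, iterDeriv_eq_within hU ha, Finset.sum_insert hiT,
      ← iterDeriv_eq_within hU ha σ (g i),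
      ← iteratedDerivWithin_const_mul ha hU.uniqueDiffOn (c i)
        (((hg i (Finset.mem_insert_self i T)).contDiffOn hU.uniqueDiffOn) a ha),
      iterDeriv_eq_within hU ha,
      IH (fun s hs => hg s (Finset.mem_insert_of_mem hs))]

private lemma iterDeriv_sub_sum {U : Set ℂ} (hU : IsOpen U) {a : ℂ} (ha : a ∈ U)
    (σ : ℕ) (f : ℂ → ℂ) (S : Finset ℕ) (c : ℕ → ℂ) (g : ℕ → ℂ → ℂ)
    (hf : AnalyticOnNhd ℂ f U) (hg : ∀ s ∈ S, AnalyticOnNhd ℂ (g s) U) :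
    iteratedDeriv σ (fun z => f z - ∑ s ∈ S, c s * g s z) a
      = iteratedDeriv σ f a - ∑ s ∈ S, c s * iteratedDeriv σ (g s) a := by
  have hfc : ContDiffOn ℂ σ f U := hf.contDiffOn hU.uniqueDiffOn
  have hgc : ContDiffOn ℂ σ (fun z => ∑ s ∈ S, c s * g s z) U :=
    ContDiffOn.sum fun s hs =>
      contDiffOn_const.mul ((hg s hs).contDiffOn hU.uniqueDiffOn)
  have h1 : (fun z => f z - ∑ s ∈ S, c s * g s z)
      = f - fun z => ∑ s ∈ S, c s * g s z := rfl
  rw [h1, ← iterDeriv_eq_within hU ha, iteratedDerivWithin_sub ha hU.uniqueDiffOn (hfc a ha) (hgc a ha),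
    iterDeriv_eq_within hU ha, iterDeriv_eq_within hU ha, iterDeriv_sum hU ha σ S c g hg]

private lemma key_vanish : ∀ (n : ℕ) (h f : ℂ → ℂ) {U : Set ℂ}, IsOpen U → ∀ {a : ℂ}, a ∈ U →
    AnalyticOnNhd ℂ h U → Set.EqOn f (fun z => (z - a) ^ n * h z) U →
    ∀ σ ≤ n, iteratedDeriv σ f a = if σ = n then (Nat.factorial n : ℂ) * h a else 0 := by
  intro n
  induction n with
  | zero =>
    intro h f U hU a ha hh hfeq σ hσ
    interval_cases σ
    simpa [iteratedDeriv_zero, Nat.factorial] using hfeq ha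
  | succ n IH =>
    intro h f U hU a ha hh hfeq σ hσ
    match σ with
    | 0 =>
      have := hfeq ha
      simp only [iteratedDeriv_zero, this, sub_self]
      simp
    | Nat.succ τ =>
      have hτ : τ ≤ n := Nat.succ_le_succ_iff.mp hσ
      rw [iteratedDeriv_succ']
      set h₁ : ℂ → ℂ := fun z => (n + 1 : ℂ) * h z + (z - a) * deriv h z with hh₁
      have hh₁a : AnalyticOnNhd ℂ h₁ U :=
        (analyticOnNhd_const.mul hh).add
          ((analyticOnNhd_id.sub analyticOnNhd_const).mul (hh.deriv_of_isOpen hU))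
      have heq : Set.EqOn (deriv f) (fun z => (z - a) ^ n * h₁ z) U := by
        intro z hz
        have h1 : deriv f z = deriv (fun w => (w - a) ^ (n + 1) * h w) z := by
          apply Filter.EventuallyEq.deriv_eq
          exact Filter.eventuallyEq_of_mem (hU.mem_nhds hz) hfeq
        have hd : HasDerivAt (fun w : ℂ => (w - a) ^ (n + 1))
            ((n + 1 : ℂ) * (z - a) ^ n * 1) z := by
          simpa using (((hasDerivAt_id z).sub_const a).fun_pow (n + 1))
        have hhd : HasDerivAt h (deriv h z) z := ((hh z hz).differentiableAt).hasDerivAt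
        have h2 := (hd.fun_mul hhd).deriv
        rw [h1, h2, hh₁]
        ring
      have := IH h₁ (deriv f) hU ha hh₁a heq τ hτ
      rw [this]
      by_cases hτn : τ = n
      · subst hτn
        simp only [if_pos rfl, hh₁, sub_self, zero_mul, add_zero, Nat.factorial_succ]
        push_cast
        ring
      · rw [if_neg hτn, if_neg (fun hc => hτn (Nat.succ_injective hc))]
end helpers

/-- The generalized fundamental Lagrange–Laurent polynomials
`L_{k,l}`, defined by the backward recursion
`L_{k,l} = ℓ_{k,l} - ∑_{s=l+1}^{ν_k-1} ℓ_{k,l}^{(s)}(z̃_k) L_{k,s}`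
(with `L_{k,ν_k-1} = ℓ_{k,ν_k-1}`, the empty-sum case), where
`ℓ_{k,l}(z) = (z-z̃_k)^l/l! · (z̃_k/z)^p · ∏_{j≠k} ((z-z̃_j)/(z̃_k-z̃_j))^{ν_j}`,
satisfy the duality `L_{k,l}^{(σ)}(z̃_j) = δ_{jk} δ_{σl}` for all
`0 ≤ σ ≤ ν_j - 1`. -/
theorem generalized_lagrange_laurent_duality
    (m r p : ℕ) (t : Fin m → ℂ) (ht : Function.Injective t) (ht0 : ∀ k, t k ≠ 0)
    (ν : Fin m → ℕ) (hν : ∀ k, 0 < ν k)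
    (hr : r = ∑ k, ν k) (hp : p + 1 ≤ r)
    (ℓ : Fin m → ℕ → ℂ → ℂ)
    (hℓ : ∀ k l, ℓ k l = fun z =>
      (z - t k) ^ l / (Nat.factorial l : ℂ) * (t k / z) ^ p *
        ∏ j ∈ Finset.univ.erase k, ((z - t j) / (t k - t j)) ^ (ν j))
    (L : Fin m → ℕ → ℂ → ℂ)
    (hL : ∀ k l, l < ν k → L k l = fun z =>
      ℓ k l z - ∑ s ∈ Finset.Ico (l + 1) (ν k), iteratedDeriv s (ℓ k l) (t k) * L k s z) :
    ∀ (j k : Fin m) (σ l : ℕ), σ < ν j → l < ν k →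
      iteratedDeriv σ (L k l) (t j) = if j = k ∧ σ = l then 1 else 0 := by
    classical
  set U : Set ℂ := {z : ℂ | z ≠ 0} with hUdef
  have hU : IsOpen U := isOpen_ne
  have htU : ∀ j, t j ∈ U := fun j => ht0 j
  -- the ℓ's are analytic away from 0
  have hℓanal : ∀ k l, AnalyticOnNhd ℂ (ℓ k l) U := by
    intro k l
    rw [hℓ]
    refine DifferentiableOn.analyticOnNhd ?_ hU
    refine DifferentiableOn.mul (DifferentiableOn.mul ?_ ?_) ?_
    · exact (((differentiable_id.sub_const _).pow l).div_const _).differentiableOn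
    · exact ((differentiableOn_const _).div differentiableOn_id (fun z hz => hz)).pow p
    · exact DifferentiableOn.fun_finsetProd (fun j _ =>
        (((differentiable_id.sub_const _).div_const _).fun_pow _).differentiableOn)
  -- the L's are analytic away from 0 (downward induction)
  have hLanal : ∀ d (k : Fin m) l, l < ν k → ν k ≤ l + d → AnalyticOnNhd ℂ (L k l) U := by
    intro d
    induction d with
    | zero => intro k l h1 h2; omega
    | succ d IH =>
      intro k l h1 h2
      rw [hL k l h1]
      refine AnalyticOnNhd.sub (hℓanal k l) ?_
      refine Finset.analyticOnNhd_fun_sum _ (fun s hs => ?_)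
      obtain ⟨hs1, hs2⟩ := Finset.mem_Ico.mp hs
      exact analyticOnNhd_const.mul (IH k s hs2 (by omega))
  -- Fact 1: off-diagonal vanishing of derivatives of ℓ
  have fact1 : ∀ (k j : Fin m), j ≠ k → ∀ l σ, σ < ν j →
      iteratedDeriv σ (ℓ k l) (t j) = 0 := by
    intro k j hjk l σ hσ
    set h : ℂ → ℂ := fun z => (z - t k) ^ l / (Nat.factorial l : ℂ) * (t k / z) ^ p *
        ((t k - t j)⁻¹ ^ ν j *
          ∏ i ∈ (Finset.univ.erase k).erase j, ((z - t i) / (t k - t i)) ^ ν i) with hdef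
    have hh : AnalyticOnNhd ℂ h U := by
      refine DifferentiableOn.analyticOnNhd ?_ hU
      refine DifferentiableOn.mul (DifferentiableOn.mul ?_ ?_) ?_
      · exact (((differentiable_id.sub_const _).pow l).div_const _).differentiableOn
      · exact ((differentiableOn_const _).div differentiableOn_id (fun z hz => hz)).pow p
      · exact (DifferentiableOn.fun_finsetProd (fun i _ =>
          (((differentiable_id.sub_const _).div_const _).fun_pow _).differentiableOn)).const_mul _
    have hjmem : j ∈ Finset.univ.erase k := Finset.mem_erase.mpr ⟨hjk, Finset.mem_univ j⟩
    have heq : Set.EqOn (ℓ k l) (fun z => (z - t j) ^ ν j * h z) U := by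
      intro z _
      rw [hℓ]
      simp only [hdef]
      rw [← Finset.mul_prod_erase _ _ hjmem, div_eq_mul_inv (z - t j), mul_pow]
      ring
    have := key_vanish (ν j) h (ℓ k l) hU (htU j) hh heq σ (le_of_lt hσ)
    rw [this, if_neg (Nat.ne_of_lt hσ)]
  -- Fact 2: diagonal derivatives of ℓ of order ≤ l
  have fact2 : ∀ (k : Fin m) l σ, σ ≤ l →
      iteratedDeriv σ (ℓ k l) (t k) = if σ = l then 1 else 0 := by
    intro k l σ hσ
    set h : ℂ → ℂ := fun z => (1 / (Nat.factorial l : ℂ)) * ((t k / z) ^ p *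
        ∏ j ∈ Finset.univ.erase k, ((z - t j) / (t k - t j)) ^ ν j) with hdef
    have hh : AnalyticOnNhd ℂ h U := by
      refine DifferentiableOn.analyticOnNhd ?_ hU
      refine DifferentiableOn.const_mul (DifferentiableOn.mul ?_ ?_) _
      · exact ((differentiableOn_const _).div differentiableOn_id (fun z hz => hz)).pow p
      · exact DifferentiableOn.fun_finsetProd (fun i _ =>
          (((differentiable_id.sub_const _).div_const _).fun_pow _).differentiableOn)
    have heq : Set.EqOn (ℓ k l) (fun z => (z - t k) ^ l * h z) U := by
      intro z _
      rw [hℓ]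
      simp only [hdef]
      ring
    have hfac : (Nat.factorial l : ℂ) ≠ 0 := by
      exact_mod_cast Nat.factorial_ne_zero l
    have hha : h (t k) = 1 / (Nat.factorial l : ℂ) := by
      simp only [hdef]
      rw [div_self (ht0 k), one_pow, Finset.prod_eq_one, mul_one, mul_one]
      intro i hi
      have : t k - t i ≠ 0 := by
        have : t i ≠ t k := fun hc => (Finset.mem_erase.mp hi).1 (ht hc)
        exact sub_ne_zero.mpr (Ne.symm this)
      rw [div_self this, one_pow]
    have := key_vanish l h (ℓ k l) hU (htU k) hh heq σ hσ
    rw [this, hha]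
    by_cases hσl : σ = l
    · rw [if_pos hσl, if_pos hσl, mul_one_div, div_self hfac]
    · rw [if_neg hσl, if_neg hσl]
  -- Main downward induction
  have main : ∀ d (k : Fin m) l, l < ν k → ν k ≤ l + d → ∀ (j : Fin m) σ, σ < ν j →
      iteratedDeriv σ (L k l) (t j) = if j = k ∧ σ = l then 1 else 0 := by
    intro d
    induction d with
    | zero => intro k l h1 h2; omega
    | succ d IH =>
      intro k l hlk hd j σ hσ
      rw [hL k l hlk]
      rw [iterDeriv_sub_sum hU (htU j) σ _ _ _ _ (hℓanal k l)
        (fun s hs => by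
          obtain ⟨hs1, hs2⟩ := Finset.mem_Ico.mp hs
          exact hLanal d k s hs2 (by omega))]
      have hsum : ∀ s ∈ Finset.Ico (l + 1) (ν k),
          iteratedDeriv σ (L k s) (t j) = if j = k ∧ σ = s then 1 else 0 := by
        intro s hs
        obtain ⟨hs1, hs2⟩ := Finset.mem_Ico.mp hs
        exact IH k s hs2 (by omega) j σ hσ
      by_cases hjk : j = k
      · subst hjk
        by_cases hσl : σ ≤ l
        · rw [fact2 j l σ hσl]
          rw [Finset.sum_eq_zero (fun s hs => by
            obtain ⟨hs1, _⟩ := Finset.mem_Ico.mp hs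
            rw [hsum s hs, if_neg (by omega), mul_zero])]
          by_cases h2 : σ = l
          · simp [h2]
          · simp [h2]
        · push_neg at hσl
          have hσIco : σ ∈ Finset.Ico (l + 1) (ν j) := Finset.mem_Ico.mpr ⟨by omega, hσ⟩
          have hsum2 : ∑ s ∈ Finset.Ico (l + 1) (ν j),
              iteratedDeriv s (ℓ j l) (t j) * iteratedDeriv σ (L j s) (t j)
              = iteratedDeriv σ (ℓ j l) (t j) := by
            rw [Finset.sum_congr rfl (fun s hs => by rw [hsum s hs])]
            have : ∀ s ∈ Finset.Ico (l + 1) (ν j),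
                iteratedDeriv s (ℓ j l) (t j) * (if j = j ∧ σ = s then 1 else 0)
                = if σ = s then iteratedDeriv s (ℓ j l) (t j) else 0 := by
              intro s _
              by_cases h : σ = s <;> simp [h]
            rw [Finset.sum_congr rfl this, Finset.sum_ite_eq _ σ _, if_pos hσIco]
          rw [hsum2, sub_self, if_neg (by omega)]
      · rw [fact1 k j hjk l σ hσ]
        rw [Finset.sum_eq_zero (fun s hs => by
          rw [hsum s hs, if_neg (by tauto), mul_zero])]
        simp [hjk]
  intro j k σ l hσ hl
  exact main (ν k) k l hl (by omega) j σ hσ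
end

section
/- Let q ∈ (0,1) and define ρ_n(z) = Σ_{j=0}^n (-1)^{n-j} [n choose j]_q q^{(n-j)/2} z^j, where [n choose j]_q is the q-binomial coefficient. Then these polynomials satisfy the Szegő forward recurrence ρ_n(z) = z ρ_{n-1}(z) + δ_n ρ_{n-1}^*(z) with Verblunsky coefficients δ_n = ρ_n(0) = (-1)^n q^{n/2}. -/
/-- The `q`-binomial coefficient `[n choose j]_q = ∏_{i=1}^j (1-q^{n-j+i})/(1-q^i)`. -/
noncomputable def qBinom (q : ℝ) (n j : ℕ) : ℝ :=
  ∏ i ∈ Finset.range j, (1 - q ^ (n - j + i + 1)) / (1 - q ^ (i + 1))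

/-- The Rogers–Szegő monic polynomial
`ρ_n(z) = ∑_{j=0}^n (-1)^{n-j} [n choose j]_q q^{(n-j)/2} z^j`, as a function. -/
noncomputable def rsPoly (q : ℝ) (n : ℕ) : ℂ → ℂ := fun z =>
  ∑ j ∈ Finset.range (n + 1),
    ((-1 : ℂ)) ^ (n - j) * ((qBinom q n j : ℝ) : ℂ) *
      (((q ^ (((n - j : ℕ) : ℝ) / 2) : ℝ)) : ℂ) * z ^ j

open Finset

noncomputable def qFact (q : ℝ) (n : ℕ) : ℝ := ∏ i ∈ Finset.range n, (1 - q ^ (i + 1))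

lemma qFact_pos {q : ℝ} (hq : q ∈ Set.Ioo (0 : ℝ) 1) (n : ℕ) : 0 < qFact q n := by
  apply Finset.prod_pos
  intro i _
  have : q ^ (i + 1) < 1 := pow_lt_one₀ hq.1.le hq.2 (Nat.succ_ne_zero i)
  linarith

lemma qBinom_eq {q : ℝ} (hq : q ∈ Set.Ioo (0 : ℝ) 1) {n j : ℕ} (h : j ≤ n) :
    qBinom q n j = qFact q n / (qFact q (n - j) * qFact q j) := by
  have hfn : qFact q n = qFact q (n - j) * ∏ i ∈ range j, (1 - q ^ (n - j + i + 1)) := by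
    conv_lhs => rw [show n = (n - j) + j from (Nat.sub_add_cancel h).symm]
    rw [qFact, Finset.prod_range_add, ← qFact]
  have h1 : qFact q (n - j) ≠ 0 := (qFact_pos hq _).ne'
  have h2 : qFact q j ≠ 0 := (qFact_pos hq _).ne'
  rw [qBinom, Finset.prod_div_distrib, ← qFact, hfn]
  field_simp

lemma qBinom_zero (q : ℝ) (n : ℕ) : qBinom q n 0 = 1 := by simp [qBinom]

lemma qBinom_self {q : ℝ} (hq : q ∈ Set.Ioo (0 : ℝ) 1) (n : ℕ) : qBinom q n n = 1 := by
  rw [qBinom]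
  apply Finset.prod_eq_one
  intro i _
  have : q ^ (i + 1) < 1 := pow_lt_one₀ hq.1.le hq.2 (Nat.succ_ne_zero i)
  rw [Nat.sub_self, Nat.zero_add]
  exact div_self (by linarith)

lemma qBinom_symm {q : ℝ} (hq : q ∈ Set.Ioo (0 : ℝ) 1) {n j : ℕ} (h : j ≤ n) :
    qBinom q n (n - j) = qBinom q n j := by
  rw [qBinom_eq hq (Nat.sub_le n j), qBinom_eq hq h, Nat.sub_sub_self h, mul_comm]

lemma qBinom_pascal {q : ℝ} (hq : q ∈ Set.Ioo (0 : ℝ) 1) {m j : ℕ} (h : j + 1 ≤ m) :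
    qBinom q (m + 1) (j + 1) = qBinom q m j + q ^ (j + 1) * qBinom q m (j + 1) := by
  rw [qBinom_eq hq (by omega : j + 1 ≤ m + 1), qBinom_eq hq (by omega : j ≤ m),
    qBinom_eq hq h]
  have e1 : m + 1 - (j + 1) = m - j := by omega
  have eF1 : qFact q (m + 1) = qFact q m * (1 - q ^ (m + 1)) := by
    rw [qFact, Finset.prod_range_succ, ← qFact]
  have eF2 : qFact q (j + 1) = qFact q j * (1 - q ^ (j + 1)) := by
    rw [qFact, Finset.prod_range_succ, ← qFact]
  have eF3 : qFact q (m - j) = qFact q (m - (j + 1)) * (1 - q ^ (m - j)) := by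
    rw [show m - j = (m - (j + 1)) + 1 from by omega, qFact, Finset.prod_range_succ, ← qFact,
      show m - (j + 1) + 1 = m - j from by omega]
  have key : q ^ (m + 1) = q ^ (j + 1) * q ^ (m - j) := by
    rw [← pow_add]; congr 1; omega
  have hj1 : (1 : ℝ) - q ^ (j + 1) ≠ 0 := by
    have : q ^ (j + 1) < 1 := pow_lt_one₀ hq.1.le hq.2 (Nat.succ_ne_zero j)
    linarith
  have hmj : (1 : ℝ) - q ^ (m - j) ≠ 0 := by
    have : q ^ (m - j) < 1 := pow_lt_one₀ hq.1.le hq.2 (by omega)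
    linarith
  have n1 : qFact q m ≠ 0 := (qFact_pos hq _).ne'
  have n2 : qFact q j ≠ 0 := (qFact_pos hq _).ne'
  have n3 : qFact q (m - (j + 1)) ≠ 0 := (qFact_pos hq _).ne'
  rw [e1, eF1, eF2, eF3, key]
  field_simp
  ring

noncomputable def rsCoeff (q : ℝ) (n j : ℕ) : ℂ :=
  ((-1 : ℂ)) ^ (n - j) * ((qBinom q n j : ℝ) : ℂ) *
    (((q ^ (((n - j : ℕ) : ℝ) / 2) : ℝ)) : ℂ)

lemma rsPoly_eq (q : ℝ) (n : ℕ) (z : ℂ) :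
    rsPoly q n z = ∑ j ∈ Finset.range (n + 1), rsCoeff q n j * z ^ j := rfl

lemma rsCoeff_key {q : ℝ} (hq : q ∈ Set.Ioo (0 : ℝ) 1) {m j : ℕ} (h : j + 1 ≤ m) :
    rsCoeff q (m + 1) (j + 1) = rsCoeff q m j +
      ((-1 : ℂ) ^ (m + 1) * (((q ^ ((((m + 1 : ℕ)) : ℝ) / 2) : ℝ)) : ℂ)) *
        rsCoeff q m (m - (j + 1)) := by
  unfold rsCoeff
  rw [show m + 1 - (j + 1) = m - j from by omega,
      show m - (m - (j + 1)) = j + 1 from by omega,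
      qBinom_symm hq h, qBinom_pascal hq h]
  have hsign : ((-1 : ℂ)) ^ (m + 1) * (-1 : ℂ) ^ (j + 1) = (-1 : ℂ) ^ (m - j) := by
    rw [← pow_add, show (m + 1) + (j + 1) = (m - j) + 2 * (j + 1) from by omega, pow_add,
      pow_mul, neg_one_sq, one_pow, mul_one]
  have hQ : q ^ ((((m + 1 : ℕ)) : ℝ) / 2) * q ^ ((((j + 1 : ℕ)) : ℝ) / 2)
      = q ^ ((((m - j : ℕ)) : ℝ) / 2) * q ^ (j + 1) := by
    rw [← Real.rpow_natCast q (j + 1), ← Real.rpow_add hq.1, ← Real.rpow_add hq.1]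
    congr 1
    rw [Nat.cast_sub (by omega : j ≤ m)]
    push_cast
    ring
  have hQ' : ((q ^ ((((m + 1 : ℕ)) : ℝ) / 2) : ℝ) : ℂ) * ((q ^ ((((j + 1 : ℕ)) : ℝ) / 2) : ℝ) : ℂ)
      = ((q ^ ((((m - j : ℕ)) : ℝ) / 2) : ℝ) : ℂ) * ((q : ℂ)) ^ (j + 1) := by
    exact_mod_cast congrArg (Complex.ofReal) hQ
  push_cast at hQ' ⊢
  linear_combination (-(((qBinom q m (j + 1) : ℝ) : ℂ)) * (-1 : ℂ) ^ (m + 1) * (-1 : ℂ) ^ (j + 1)) * hQ'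
    + (-(q : ℂ) ^ (j + 1) * ((qBinom q m (j + 1) : ℝ) : ℂ) * ((q ^ ((((m - j : ℕ)) : ℝ) / 2) : ℝ) : ℂ)) * hsign

lemma rsCoeff_top (q : ℝ) (m : ℕ) (hq : q ∈ Set.Ioo (0 : ℝ) 1) : rsCoeff q m m = 1 := by
  unfold rsCoeff
  rw [Nat.sub_self, qBinom_self hq]
  norm_num

/-- The Rogers–Szegő polynomials satisfy the Szegő forward
recurrence `ρ_n(z) = z ρ_{n-1}(z) + δ_n ρ_{n-1}^*(z)` with Verblunsky
coefficients `δ_n = ρ_n(0) = (-1)^n q^{n/2}`, where (the coefficients being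
real) `ρ_{n-1}^*(z) = z^{n-1} ρ_{n-1}(1/z)`. -/
theorem rogers_szego_recurrence (q : ℝ) (hq : q ∈ Set.Ioo (0 : ℝ) 1)
    (n : ℕ) (hn : 1 ≤ n) :
    (∀ z : ℂ, z ≠ 0 →
      rsPoly q n z = z * rsPoly q (n - 1) z +
        ((-1 : ℂ) ^ n * (((q ^ ((n : ℝ) / 2) : ℝ)) : ℂ)) *
          (z ^ (n - 1) * rsPoly q (n - 1) z⁻¹)) ∧
    rsPoly q n 0 = (-1 : ℂ) ^ n * (((q ^ ((n : ℝ) / 2) : ℝ)) : ℂ) := by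
  obtain ⟨m, rfl⟩ : ∃ m, n = m + 1 := ⟨n - 1, by omega⟩
  have hδ : rsCoeff q (m + 1) 0 = (-1 : ℂ) ^ (m + 1) * (((q ^ (((m + 1 : ℕ) : ℝ) / 2) : ℝ)) : ℂ) := by
    unfold rsCoeff
    rw [Nat.sub_zero, qBinom_zero]
    norm_num
  constructor
  · intro z hz
    simp only [Nat.add_sub_cancel]
    set δ : ℂ := (-1 : ℂ) ^ (m + 1) * (((q ^ (((m + 1 : ℕ) : ℝ) / 2) : ℝ)) : ℂ) with hδdef
    have hδ' : ((-1 : ℂ) ^ (m + 1) * (((q ^ (((m + 1 : ℝ)) / 2) : ℝ)) : ℂ)) = δ := by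
      rw [hδdef]; norm_num
    rw [rsPoly_eq, rsPoly_eq, rsPoly_eq]
    -- second piece: z^m * ∑ c j z⁻¹^j = ∑ c (m-j) z^j
    have hpow : ∀ j ∈ range (m + 1), rsCoeff q m j * z⁻¹ ^ j * z ^ m
        = rsCoeff q m j * z ^ (m - j) := by
      intro j hj
      rw [mem_range] at hj
      rw [mul_assoc, inv_pow, inv_mul_eq_div, pow_sub₀ z hz (by omega)]
      ring
    have hrefl : ∑ j ∈ range (m + 1), rsCoeff q m j * z ^ (m - j)
        = ∑ j ∈ range (m + 1), rsCoeff q m (m - j) * z ^ j := by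
      rw [← Finset.sum_range_reflect (fun j => rsCoeff q m (m - j) * z ^ j) (m + 1)]
      apply Finset.sum_congr rfl
      intro j hj
      rw [mem_range] at hj
      rw [show m + 1 - 1 - j = m - j from by omega, show m - (m - j) = j from by omega]
    have h2 : z ^ m * ∑ j ∈ range (m + 1), rsCoeff q m j * z⁻¹ ^ j
        = ∑ j ∈ range (m + 1), rsCoeff q m (m - j) * z ^ j := by
      rw [mul_comm, Finset.sum_mul, Finset.sum_congr rfl hpow, hrefl]
    rw [h2, Finset.mul_sum, Finset.mul_sum]
    -- now both sides are explicit sums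
    rw [Finset.sum_range_succ' (fun j => rsCoeff q (m + 1) j * z ^ j) (m + 1)]
    rw [Finset.sum_range_succ' (fun j => δ * (rsCoeff q m (m - j) * z ^ j)) m]
    rw [Finset.sum_range_succ (fun j => z * (rsCoeff q m j * z ^ j)) m]
    rw [Finset.sum_range_succ (fun j => rsCoeff q (m + 1) (j + 1) * z ^ (j + 1)) m]
    have hmain : ∑ j ∈ range m, rsCoeff q (m + 1) (j + 1) * z ^ (j + 1)
        = ∑ j ∈ range m, (z * (rsCoeff q m j * z ^ j) + δ * (rsCoeff q m (m - (j + 1)) * z ^ (j + 1))) := by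
      apply Finset.sum_congr rfl
      intro j hj
      rw [mem_range] at hj
      rw [rsCoeff_key hq (by omega : j + 1 ≤ m), hδdef]
      ring
    rw [hmain, Finset.sum_add_distrib]
    rw [rsCoeff_top q (m + 1) hq, rsCoeff_top q m hq, hδ, Nat.sub_zero, rsCoeff_top q m hq]
    ring
  · rw [rsPoly_eq]
    rw [Finset.sum_eq_single 0]
    · rw [hδ]; ring
    · intro j _ hj0
      rw [zero_pow hj0, mul_zero]
    · intro h
      exact absurd (mem_range.mpr (by omega)) h
end

section
/- Let q ∈ (0,1), N = 2ℓ+1, and let z_j = e^{i(θ_0 + 2πj/N)}, j = 0,...,N-1, be the zeros of z^N - τ with τ = e^{iNθ_0}. If the quadrature rule Σ_j λ_j F(z_j) is exact for all F ∈ Λ_{-ℓ,ℓ} for the Rogers-Szegő weight (with moments μ_k = q^{k²/2}), then the weights are λ_j = (1/N)[1 + 2 Σ_{k=1}^{ℓ} q^{k²/2} cos((θ_0 + 2πj/N)k)]; in particular all λ_j are real. -/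
open Real

lemma aux_sum_Icc_neg (f : ℤ → ℂ) (ℓ : ℕ) :
    ∑ k ∈ Finset.Icc (-(ℓ:ℤ)) ℓ, f k
      = f 0 + ∑ k ∈ Finset.Icc 1 ℓ, (f k + f (-(k:ℤ))) := by
  induction ℓ with
  | zero => simp
  | succ n ih =>
    have h1 : Finset.Icc (-((n+1:ℕ):ℤ)) ((n+1:ℕ):ℤ)
        = insert (-((n+1:ℕ):ℤ)) (insert ((n+1:ℕ):ℤ) (Finset.Icc (-(n:ℤ)) n)) := by
      ext x; simp; omega
    have h2 : Finset.Icc 1 (n+1) = insert (n+1) (Finset.Icc 1 n) := by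
      ext x; simp; omega
    rw [h1, h2, Finset.sum_insert (by simp only [Finset.mem_insert, Finset.mem_Icc]; omega),
      Finset.sum_insert (by simp only [Finset.mem_Icc]; omega),
      Finset.sum_insert (by simp only [Finset.mem_Icc]; omega), ih]
    push_cast
    ring

lemma aux_inj (ℓ : ℕ) : Function.Injective fun m : ℕ => (m:ℤ) - ℓ :=
  fun a b h => by simpa using h

lemma aux_Icc_map (ℓ : ℕ) :
    Finset.Icc (-(ℓ:ℤ)) ℓ
      = (Finset.range (2*ℓ+1)).map ⟨fun m : ℕ => (m:ℤ) - ℓ, aux_inj ℓ⟩ := by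
  ext x
  simp only [Finset.mem_Icc, Finset.mem_map, Finset.mem_range, Function.Embedding.coeFn_mk]
  constructor
  · intro hx; exact ⟨(x + ℓ).toNat, by omega, by change ((x + ℓ).toNat : ℤ) - ℓ = x; omega⟩
  · rintro ⟨m, hm, rfl⟩; change -(ℓ:ℤ) ≤ (m:ℤ) - ℓ ∧ (m:ℤ) - ℓ ≤ ℓ; omega

lemma aux_geom_zero (N ℓ : ℕ) (hN : N = 2*ℓ+1) (w : ℂ) (hw0 : w ≠ 0)
    (hwN : w ^ N = 1) (hw1 : w ≠ 1) :
    ∑ k ∈ Finset.Icc (-(ℓ:ℤ)) ℓ, w ^ k = 0 := by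
  rw [aux_Icc_map, Finset.sum_map]
  simp only [Function.Embedding.coeFn_mk]
  have hrw : ∀ m : ℕ, w ^ ((m:ℤ) - ℓ) = w ^ (-(ℓ:ℤ)) * w ^ m := by
    intro m
    rw [zpow_sub₀ hw0, zpow_natCast, zpow_neg, zpow_natCast]
    ring
  simp only [hrw]
  rw [← Finset.mul_sum, geom_sum_eq hw1, ← hN, hwN]
  simp

lemma aux_geom_N (N ℓ : ℕ) (hN : N = 2*ℓ+1) :
    ∑ k ∈ Finset.Icc (-(ℓ:ℤ)) ℓ, (1:ℂ) ^ k = (N:ℂ) := by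
  simp only [one_zpow, Finset.sum_const, nsmul_eq_mul, mul_one, Int.card_Icc]
  rw [show ((ℓ:ℤ) + 1 - -(ℓ:ℤ)).toNat = N by omega]

lemma aux_exp_pow (a : ℝ) (N : ℕ) (m : ℤ) (hdiff : (N:ℝ) * a = (m:ℝ) * (2 * π)) :
    Complex.exp ((a:ℂ) * Complex.I) ^ N = 1 := by
  rw [← Complex.exp_nat_mul]
  have e1 : (N:ℂ) * ((a:ℂ) * Complex.I) = ((((N:ℝ) * a) : ℝ) : ℂ) * Complex.I := by
    push_cast; ring
  have e2 : ((((N:ℝ) * a) : ℝ) : ℂ) * Complex.I = (m:ℂ) * (2 * (π:ℂ) * Complex.I) := by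
    rw [hdiff]; push_cast; ring
  rw [e1, e2]
  exact Complex.exp_int_mul_two_pi_mul_I m

lemma aux_exp_ne_one (a : ℝ) (h : ∀ n : ℤ, a ≠ n * (2 * π)) :
    Complex.exp ((a:ℂ) * Complex.I) ≠ 1 := by
  intro h1
  rw [Complex.exp_eq_one_iff] at h1
  obtain ⟨n, hn⟩ := h1
  apply h n
  have hn' : (a:ℂ) * Complex.I = (((n:ℝ) * (2 * π) : ℝ):ℂ) * Complex.I := by
    rw [hn]; push_cast; ring
  have := mul_right_cancel₀ Complex.I_ne_zero hn'
  exact_mod_cast this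

/-- For the Rogers–Szegő moments `μ_k = q^{k²/2}` and `N = 2ℓ+1`
equally spaced nodes `z_j = e^{i(θ_0 + 2πj/N)}` (the zeros of `z^N - e^{iNθ_0}`),
if `∑_j λ_j F(z_j)` is exact on `Λ_{-ℓ,ℓ}`, then
`λ_j = (1/N)[1 + 2 ∑_{k=1}^ℓ q^{k²/2} cos((θ_0 + 2πj/N)k)]`; in particular all
weights are real. -/
theorem interpolatory_weights_odd (q : ℝ) (hq : q ∈ Set.Ioo (0 : ℝ) 1)
    (ℓ N : ℕ) (hN : N = 2 * ℓ + 1) (θ0 : ℝ)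
    (z : Fin N → ℂ)
    (hz : ∀ j, z j = Complex.exp ((↑(θ0 + 2 * π * (j : ℕ) / N) : ℂ) * Complex.I))
    (lam : Fin N → ℂ)
    (hexact : ∀ k : ℤ, k.natAbs ≤ ℓ →
      (∑ j, lam j * (z j) ^ k) = ((q ^ (((k : ℝ) ^ 2) / 2) : ℝ) : ℂ)) :
    ∀ j : Fin N, lam j =
      ((((1 + 2 * ∑ k ∈ Finset.Icc 1 ℓ,
          q ^ (((k : ℝ) ^ 2) / 2) * Real.cos ((θ0 + 2 * π * (j : ℕ) / N) * k)) / N : ℝ)) : ℂ) := by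
  intro j
  have hNR : (N:ℝ) ≠ 0 := Nat.cast_ne_zero.mpr (by omega)
  have hNC : (N:ℂ) ≠ 0 := Nat.cast_ne_zero.mpr (by omega)
  set θ : Fin N → ℝ := fun j' => θ0 + 2 * π * (j' : ℕ) / N with hθdef
  have hzj : ∀ j', z j' = Complex.exp ((θ j' : ℂ) * Complex.I) := hz
  have hz0 : ∀ j', z j' ≠ 0 := fun j' => by rw [hzj]; exact Complex.exp_ne_zero _
  have hgeom : ∀ j' : Fin N,
      (∑ k ∈ Finset.Icc (-(ℓ:ℤ)) ℓ, (z j' * (z j)⁻¹) ^ k)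
        = if j' = j then (N:ℂ) else 0 := by
    intro j'
    by_cases hjj : j' = j
    · subst hjj
      rw [mul_inv_cancel₀ (hz0 j'), if_pos rfl]
      exact aux_geom_N N ℓ hN
    · rw [if_neg hjj]
      have hw : z j' * (z j)⁻¹ = Complex.exp ((((θ j' - θ j : ℝ)):ℂ) * Complex.I) := by
        rw [hzj, hzj, ← Complex.exp_neg, ← Complex.exp_add]
        push_cast
        ring_nf
      obtain ⟨m, hm, hdiff⟩ : ∃ m : ℤ, m = ((j':ℕ):ℤ) - ((j:ℕ):ℤ) ∧
          (N:ℝ) * (θ j' - θ j) = (m:ℝ) * (2 * π) := by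
        refine ⟨_, rfl, ?_⟩
        simp only [hθdef]
        push_cast
        field_simp
        ring
      have hne : ∀ n : ℤ, θ j' - θ j ≠ n * (2 * π) := by
        intro n hn
        have h2 : (m:ℝ) * (2 * π) = (((N:ℤ) * n : ℤ):ℝ) * (2 * π) := by
          rw [← hdiff, hn]
          push_cast
          ring
        have h3 : m = (N:ℤ) * n := by
          have := mul_right_cancel₀ (by positivity : (2 * π : ℝ) ≠ 0) h2
          exact_mod_cast this
        have hlt1 := j'.isLt
        have hlt2 := j.isLt
        have hNZ : (0:ℤ) < (N:ℤ) := by exact_mod_cast Nat.pos_of_ne_zero (by omega)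
        have : (j':ℕ) = (j:ℕ) := by
          rcases lt_trichotomy n 0 with h | h | h
          · have : (N:ℤ) * n ≤ -N := by nlinarith
            omega
          · subst h; simp at h3; omega
          · have : (N:ℤ) ≤ (N:ℤ) * n := by nlinarith
            omega
        exact hjj (Fin.ext this)
      rw [hw]
      exact aux_geom_zero N ℓ hN _ (Complex.exp_ne_zero _)
        (aux_exp_pow _ N _ hdiff) (aux_exp_ne_one _ hne)
  have key : ∑ k ∈ Finset.Icc (-(ℓ:ℤ)) ℓ,
      (((q ^ (((k:ℝ))^2/2) : ℝ)):ℂ) * (z j) ^ (-k) = (N:ℂ) * lam j := by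
    calc ∑ k ∈ Finset.Icc (-(ℓ:ℤ)) ℓ, (((q ^ (((k:ℝ))^2/2) : ℝ)):ℂ) * (z j) ^ (-k)
        = ∑ k ∈ Finset.Icc (-(ℓ:ℤ)) ℓ, (∑ j', lam j' * (z j')^k) * (z j)^(-k) := by
          refine Finset.sum_congr rfl fun k hk => ?_
          rw [hexact k (by simp only [Finset.mem_Icc] at hk; omega)]
      _ = ∑ j', ∑ k ∈ Finset.Icc (-(ℓ:ℤ)) ℓ, lam j' * (z j')^k * (z j)^(-k) := by
          rw [Finset.sum_comm]
          exact Finset.sum_congr rfl fun k _ => by rw [Finset.sum_mul]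
      _ = ∑ j', lam j' * ∑ k ∈ Finset.Icc (-(ℓ:ℤ)) ℓ, (z j' * (z j)⁻¹)^k := by
          refine Finset.sum_congr rfl fun j' _ => ?_
          rw [Finset.mul_sum]
          refine Finset.sum_congr rfl fun k _ => ?_
          rw [mul_zpow, inv_zpow, ← zpow_neg]
          ring
      _ = ∑ j', lam j' * (if j' = j then (N:ℂ) else 0) :=
          Finset.sum_congr rfl fun j' _ => by rw [hgeom j']
      _ = (N:ℂ) * lam j := by
          rw [Finset.sum_eq_single j (fun b _ hb => by rw [if_neg hb, mul_zero])
            (fun h => absurd (Finset.mem_univ j) h)]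
          rw [if_pos rfl]; ring
  rw [aux_sum_Icc_neg (fun k => (((q ^ (((k:ℝ))^2/2) : ℝ)):ℂ) * (z j) ^ (-k)) ℓ] at key
  beta_reduce at key
  push_cast [neg_neg, neg_zero] at key
  have hterm : ∀ x : ℕ, x ∈ Finset.Icc 1 ℓ →
      ((((q ^ (((x:ℝ))^2/2) : ℝ)):ℂ) * (z j) ^ (-(x:ℤ))
        + (((q ^ (((-(x:ℝ)))^2/2) : ℝ)):ℂ) * (z j) ^ ((x:ℤ)))
      = ((2 * (q ^ (((x:ℝ))^2/2) * Real.cos (θ j * x)) : ℝ) : ℂ) := by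
    intro x _
    have hneg : ((-(x:ℝ))^2/2) = ((x:ℝ)^2/2) := by ring
    have hzk : ∀ n : ℤ, (z j) ^ n = Complex.exp ((n:ℂ) * ((θ j : ℂ) * Complex.I)) := by
      intro n
      rw [hzj, Complex.exp_int_mul]
    rw [hneg, hzk (-(x:ℤ)), hzk ((x:ℤ)), Int.cast_neg, ← mul_add]
    have h2c : Complex.exp ((-(((x:ℤ)):ℂ)) * ((θ j : ℂ) * Complex.I))
        + Complex.exp ((((x:ℤ)):ℂ) * ((θ j : ℂ) * Complex.I))
        = 2 * Complex.cos (((θ j * x : ℝ)):ℂ) := by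
      rw [Complex.two_cos]
      push_cast
      ring_nf
    rw [h2c, ← Complex.ofReal_cos]
    push_cast
    ring
  rw [Finset.sum_congr rfl hterm] at key
  have hf0 : (((q ^ (((0:ℝ))^2/(2:ℝ)) : ℝ)):ℂ) * (z j) ^ (-(0:ℤ)) = 1 := by
    norm_num
  rw [show ((0:ℝ)^2/2) = ((0:ℝ)) by norm_num, Real.rpow_zero] at key
  simp only [zpow_zero, Complex.ofReal_one, one_mul] at key
  have key2 : (N:ℂ) * lam j
      = ((1 + 2 * ∑ k ∈ Finset.Icc 1 ℓ,
          q ^ (((k:ℝ))^2/2) * Real.cos (θ j * k) : ℝ) : ℂ) := by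
    rw [← key]
    push_cast
    rw [Finset.mul_sum]
  have goalθ : ((θ0 + 2 * π * ((j:ℕ):ℝ) / N)) = θ j := by rw [hθdef]
  apply mul_left_cancel₀ hNC
  rw [key2]
  push_cast [goalθ]
  field_simp
end
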